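/- Let K ⊆ [0,1]^d be a down-closed convex set with 0 ∈ K, and let f : [0,1]^d → ℝ be a non-negative, continuously differentiable, M₁-Lipschitz, continuous DR-submodular function. Define h(x) = 1 − e^{−x} coordinate-wise and F(x) = ∫₀¹ (e^{z−1} / ((1−e^{−1}) z)) · (f(1 − e^{−z x}) − f(0)) dz. Then for all x, y ∈ K: (1/e)·f(y) − f(h(x)) ≤ (1 − e^{−1}) · ⟨∇F(x), y − x⟩. In particular, f is (1/e)-Upper-Linearizable with scaling parameter β = 1 − e^{−1}, reparametrization h, and surrogate potential 𝔤(f,x) = ∇F(x). -/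

import Mathlib

open scoped RealInnerProductSpace

noncomputable section

/-- Membership in the unit box `[0,1]^d`. -/
def inBox {d : ℕ} (x : EuclideanSpace ℝ (Fin d)) : Prop :=
  ∀ i, x i ∈ Set.Icc (0 : ℝ) 1

/-- Continuous DR-submodularity: the gradient is coordinate-wise antitone on `[0,1]^d`. -/
def DRSubmodular {d : ℕ} (f : EuclideanSpace ℝ (Fin d) → ℝ) : Prop :=
  ∀ x y : EuclideanSpace ℝ (Fin d), inBox x → inBox y → (∀ i, x i ≤ y i) →
    ∀ i, gradient f y i ≤ gradient f x i

/-- The exponential reparametrization `h_z(x) = 1 - e^{-z x}` (coordinate-wise). -/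
def hmap {d : ℕ} (z : ℝ) (x : EuclideanSpace ℝ (Fin d)) : EuclideanSpace ℝ (Fin d) :=
  WithLp.toLp 2 (fun i => 1 - Real.exp (-(z * x i)))

/-- Coordinate-wise probabilistic sum `x ⊕ y = 1 - (1-x) ⊙ (1-y)`. -/
def psum {d : ℕ} (x y : EuclideanSpace ℝ (Fin d)) : EuclideanSpace ℝ (Fin d) :=
  WithLp.toLp 2 (fun i => 1 - (1 - x i) * (1 - y i))

/-- Coordinate-wise (Hadamard) product. -/
def had {d : ℕ} (u v : EuclideanSpace ℝ (Fin d)) : EuclideanSpace ℝ (Fin d) :=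
  WithLp.toLp 2 (fun i => u i * v i)

/-- Coordinate-wise exponential `e^{-z x}`. -/
def expv {d : ℕ} (z : ℝ) (x : EuclideanSpace ℝ (Fin d)) : EuclideanSpace ℝ (Fin d) :=
  WithLp.toLp 2 (fun i => Real.exp (-(z * x i)))

/-- The surrogate potential
`F(x) = ∫₀¹ (e^{z-1} / ((1-e⁻¹) z)) (f(1 - e^{-z x}) - f(0)) dz`. -/
def surrogate {d : ℕ} (f : EuclideanSpace ℝ (Fin d) → ℝ)
    (x : EuclideanSpace ℝ (Fin d)) : ℝ :=
  ∫ z in (0:ℝ)..1, (Real.exp (z - 1) / ((1 - Real.exp (-1)) * z)) * (f (hmap z x) - f 0)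

/-- A set `K ⊆ [0,1]^d` is down-closed if `y ∈ K` and `0 ≤ x ≤ y` imply `x ∈ K`. -/
def DownClosed {d : ℕ} (K : Set (EuclideanSpace ℝ (Fin d))) : Prop :=
  ∀ y ∈ K, ∀ x : EuclideanSpace ℝ (Fin d), (∀ i, 0 ≤ x i) → (∀ i, x i ≤ y i) → x ∈ K



open MeasureTheory Set
open scoped Interval

section Helpers

variable {d : ℕ}

lemma euclid_inner_apply (u v : EuclideanSpace ℝ (Fin d)) : ⟪u, v⟫ = ∑ i, u i * v i := by
  simp [PiLp.inner_apply, RCLike.inner_apply, mul_comm]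

lemma inner_gradient_eq (g : EuclideanSpace ℝ (Fin d) → ℝ) (p v : EuclideanSpace ℝ (Fin d)) :
    ⟪gradient g p, v⟫ = fderiv ℝ g p v :=
  InnerProductSpace.toDual_symm_apply

lemma continuous_gradient {g : EuclideanSpace ℝ (Fin d) → ℝ} (hg : ContDiff ℝ 1 g) :
    Continuous (gradient g) :=
  (InnerProductSpace.toDual ℝ (EuclideanSpace ℝ (Fin d))).symm.continuous.comp
    (hg.continuous_fderiv one_ne_zero)

lemma continuous_euclid_of_coords {α : Type*} [TopologicalSpace α]
    {g : α → EuclideanSpace ℝ (Fin d)} (h : ∀ i, Continuous fun s => g s i) :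
    Continuous g :=
  (PiLp.continuousLinearEquiv 2 ℝ (fun _ : Fin d => ℝ)).symm.continuous.comp (continuous_pi h)

lemma euclid_norm_le_of_coord {u v : EuclideanSpace ℝ (Fin d)} {c : ℝ} (hc : 0 ≤ c)
    (h : ∀ i, |u i| ≤ c * |v i|) : ‖u‖ ≤ c * ‖v‖ := by
  rw [EuclideanSpace.norm_eq, EuclideanSpace.norm_eq]
  have h2 : ∀ i ∈ Finset.univ, ‖u i‖ ^ 2 ≤ c ^ 2 * ‖v i‖ ^ 2 := by
    intro i _
    have := h i
    have h3 : |u i| ^ 2 ≤ (c * |v i|) ^ 2 := by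
      apply sq_le_sq' _ this
      nlinarith [abs_nonneg (u i)]
    simpa [Real.norm_eq_abs, mul_pow] using h3
  calc Real.sqrt (∑ i, ‖u i‖ ^ 2) ≤ Real.sqrt (∑ i, c ^ 2 * ‖v i‖ ^ 2) :=
        Real.sqrt_le_sqrt (Finset.sum_le_sum h2)
    _ = c * Real.sqrt (∑ i, ‖v i‖ ^ 2) := by
        rw [← Finset.mul_sum, Real.sqrt_mul (by positivity), Real.sqrt_sq hc]

lemma euclid_norm_le_card {u : EuclideanSpace ℝ (Fin d)} {m : ℝ} (hm : 0 ≤ m)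
    (h : ∀ i, |u i| ≤ m) : ‖u‖ ≤ Real.sqrt d * m := by
  rw [EuclideanSpace.norm_eq]
  have h2 : ∀ i ∈ Finset.univ, ‖u i‖ ^ 2 ≤ m ^ 2 := by
    intro i _
    have h3 : |u i| ^ 2 ≤ m ^ 2 := by nlinarith [abs_nonneg (u i), h i]
    simpa [Real.norm_eq_abs] using h3
  calc Real.sqrt (∑ i, ‖u i‖ ^ 2) ≤ Real.sqrt (∑ _i : Fin d, m ^ 2) :=
        Real.sqrt_le_sqrt (Finset.sum_le_sum h2)
    _ = Real.sqrt d * m := by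
        rw [Finset.sum_const, Finset.card_univ, Fintype.card_fin, nsmul_eq_mul,
          Real.sqrt_mul (by positivity), Real.sqrt_sq hm]

lemma abs_coord_le_norm (u : EuclideanSpace ℝ (Fin d)) (i : Fin d) : |u i| ≤ ‖u‖ := by
  have := EuclideanSpace.norm_eq u
  rw [this]
  have : |u i| = Real.sqrt (‖u i‖ ^ 2) := by
    rw [Real.sqrt_sq_eq_abs, Real.norm_eq_abs, abs_abs]
  rw [this]
  apply Real.sqrt_le_sqrt
  exact Finset.single_le_sum (f := fun j => ‖u j‖ ^ 2) (fun j _ => by positivity) (Finset.mem_univ i)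

/-- Diagonal continuous linear map on Euclidean space. -/
def diagCLM (w : EuclideanSpace ℝ (Fin d)) :
    EuclideanSpace ℝ (Fin d) →L[ℝ] EuclideanSpace ℝ (Fin d) :=
  LinearMap.toContinuousLinearMap
    { toFun := fun v => (WithLp.toLp 2 (fun i => w i * v i) : EuclideanSpace ℝ (Fin d))
      map_add' := by
        intro a b; ext i; simp [PiLp.add_apply]; ring
      map_smul' := by
        intro c a; ext i; simp [PiLp.smul_apply]; ring }

@[simp] lemma diagCLM_apply (w v : EuclideanSpace ℝ (Fin d)) (i : Fin d) :
    diagCLM w v i = w i * v i := rfl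

lemma continuous_diagCLM : Continuous (diagCLM (d := d)) := by
  have : IsLinearMap ℝ (diagCLM (d := d)) := by
    constructor
    · intro a b; apply ContinuousLinearMap.ext; intro v; ext i
      simp [PiLp.add_apply]; ring
    · intro c a; apply ContinuousLinearMap.ext; intro v; ext i
      simp [PiLp.smul_apply]; ring
  exact (IsLinearMap.mk' _ this).continuous_of_finiteDimensional
/-- Chain rule for a scalar function composed with a coordinate-wise differentiable curve. -/
lemma hasDerivAt_comp_euclid {f : EuclideanSpace ℝ (Fin d) → ℝ} (hf : ContDiff ℝ 1 f)
    {c : ℝ → EuclideanSpace ℝ (Fin d)} {c' : EuclideanSpace ℝ (Fin d)} {t : ℝ}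
    (hc : ∀ i, HasDerivAt (fun s => c s i) (c' i) t) :
    HasDerivAt (fun s => f (c s)) (⟪gradient f (c t), c'⟫) t := by
  have e := PiLp.continuousLinearEquiv 2 ℝ (fun _ : Fin d => ℝ)
  have h1 : HasDerivAt (fun s => (PiLp.continuousLinearEquiv 2 ℝ (fun _ : Fin d => ℝ)) (c s))
      ((PiLp.continuousLinearEquiv 2 ℝ (fun _ : Fin d => ℝ)) c') t := hasDerivAt_pi.2 hc
  have h2 : HasDerivAt c c' t := by
    have := ((PiLp.continuousLinearEquiv 2 ℝ (fun _ : Fin d => ℝ)).symm.hasFDerivAt).comp_hasDerivAt t h1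
    simpa [Function.comp_def] using this
  have h3 := ((hf.differentiable one_ne_zero) (c t)).hasFDerivAt.comp_hasDerivAt t h2
  rw [inner_gradient_eq]
  exact h3
lemma hasFDerivAt_hmap (z : ℝ) (x : EuclideanSpace ℝ (Fin d)) :
    HasFDerivAt (hmap z)
      (diagCLM (WithLp.toLp 2 (fun i => z * Real.exp (-(z * x i))) : EuclideanSpace ℝ (Fin d))) x := by
  set e := PiLp.continuousLinearEquiv 2 ℝ (fun _ : Fin d => ℝ) with he
  set D' : (Fin d → ℝ) →L[ℝ] (Fin d → ℝ) :=
    ContinuousLinearMap.pi (fun i => (z * Real.exp (-(z * x i))) •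
      (ContinuousLinearMap.proj (R := ℝ) (φ := fun _ : Fin d => ℝ) i))
    with hD'
  have hcoord : ∀ i, HasFDerivAt (fun v : Fin d → ℝ => 1 - Real.exp (-(z * v i)))
      ((z * Real.exp (-(z * x i))) • (ContinuousLinearMap.proj (R := ℝ) (φ := fun _ : Fin d => ℝ) i)) (e x) := by
    intro i
    have hs : HasDerivAt (fun s : ℝ => 1 - Real.exp (-(z * s))) (z * Real.exp (-(z * x i))) (x i) := by
      have h1 : HasDerivAt (fun s : ℝ => -(z * s)) (-z) (x i) := by
        simpa [Pi.neg_def] using ((hasDerivAt_id (x i)).const_mul z).neg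
      have h2 := (Real.hasDerivAt_exp (-(z * x i))).comp (x i) h1
      have h3 := h2.const_sub 1
      exact h3.congr_deriv (by ring)
    have hproj : HasFDerivAt (fun v : Fin d → ℝ => v i) (ContinuousLinearMap.proj (R := ℝ) (φ := fun _ : Fin d => ℝ) i) (e x) :=
      hasFDerivAt_apply i (e x)
    have := hs.comp_hasFDerivAt (e x) hproj
    exact this
  have hG : HasFDerivAt (fun v : Fin d → ℝ => (fun i => 1 - Real.exp (-(z * v i)) : Fin d → ℝ))
      D' (e x) := by
    apply hasFDerivAt_pi''
    intro i
    have hpp : (ContinuousLinearMap.proj (R := ℝ) (φ := fun _ : Fin d => ℝ) i).comp D' =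
        (z * Real.exp (-(z * x i))) • (ContinuousLinearMap.proj (R := ℝ) (φ := fun _ : Fin d => ℝ) i) := by
      ext v
      simp [hD']
    rw [hpp]
    exact hcoord i
  -- now conjugate by e
  have h2 : HasFDerivAt (fun x' : EuclideanSpace ℝ (Fin d) =>
      e.symm ((fun v : Fin d → ℝ => (fun i => 1 - Real.exp (-(z * v i)) : Fin d → ℝ)) (e x')))
      (((e.symm : (Fin d → ℝ) →L[ℝ] EuclideanSpace ℝ (Fin d)).comp D').comp
        (e : EuclideanSpace ℝ (Fin d) →L[ℝ] (Fin d → ℝ))) x := by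
    exact (e.symm.hasFDerivAt.comp _ (hG.comp x (e.hasFDerivAt)))
  convert h2 using 1
  · funext x'; rfl
  all_goals
    apply ContinuousLinearMap.ext
    intro v
    ext i
    rw [diagCLM_apply]
    rfl
/-- Concavity along nonnegative directions: `f (p + w) - f p ≤ ⟪∇f p, w⟫`. -/
lemma grad_lb {f : EuclideanSpace ℝ (Fin d) → ℝ} (hf : ContDiff ℝ 1 f)
    (hDR : DRSubmodular f) {p w : EuclideanSpace ℝ (Fin d)}
    (hp : inBox p) (hw : ∀ i, 0 ≤ w i) (hpw : inBox (p + w)) :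
    f (p + w) - f p ≤ ⟪gradient f p, w⟫ := by
  have haddi : ∀ (t : ℝ) (i : Fin d), (p + t • w) i = p i + t * w i := by
    intro t i; simp [PiLp.add_apply, PiLp.smul_apply]
  have hbox : ∀ t ∈ Icc (0:ℝ) 1, inBox (p + t • w) := by
    intro t ht i
    rw [haddi]
    constructor
    · have := (hp i).1; have := hw i; nlinarith [ht.1]
    · have h1 : p i + t * w i ≤ p i + w i := by nlinarith [hw i, ht.1, ht.2]
      have h2 := (hpw i).2
      rw [PiLp.add_apply] at h2
      linarith
  have hderiv : ∀ t : ℝ, HasDerivAt (fun s => f (p + s • w)) (⟪gradient f (p + t • w), w⟫) t := by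
    intro t
    apply hasDerivAt_comp_euclid hf
    intro i
    have : HasDerivAt (fun s : ℝ => p i + s * w i) (w i) t := by
      simpa using ((hasDerivAt_id t).mul_const (w i)).const_add (p i)
    exact this.congr_deriv rfl |>.congr_of_eventuallyEq (by
      filter_upwards with s
      rw [haddi]) |>.congr_deriv rfl
  have hcont : Continuous fun t : ℝ => ⟪gradient f (p + t • w), w⟫ := by
    apply Continuous.inner
    · exact (continuous_gradient hf).comp (by continuity)
    · exact continuous_const
  have hftc : f (p + w) - f p = ∫ t in (0:ℝ)..1, ⟪gradient f (p + t • w), w⟫ := by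
    have := intervalIntegral.integral_eq_sub_of_hasDerivAt
      (f := fun s => f (p + s • w))
      (fun t _ => hderiv t) (hcont.intervalIntegrable 0 1)
    rw [this]
    norm_num
  rw [hftc]
  have hmono : ∀ t ∈ Icc (0:ℝ) 1, ⟪gradient f (p + t • w), w⟫ ≤ ⟪gradient f p, w⟫ := by
    intro t ht
    rw [euclid_inner_apply, euclid_inner_apply]
    apply Finset.sum_le_sum
    intro i _
    have hle : gradient f (p + t • w) i ≤ gradient f p i := by
      apply hDR p (p + t • w) hp (hbox t ht)
      intro j
      rw [haddi]
      nlinarith [hw j, ht.1]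
    exact mul_le_mul_of_nonneg_right hle (hw i)
  calc (∫ t in (0:ℝ)..1, ⟪gradient f (p + t • w), w⟫)
      ≤ ∫ _t in (0:ℝ)..1, ⟪gradient f p, w⟫ := by
        apply intervalIntegral.integral_mono_on zero_le_one
          (hcont.intervalIntegrable 0 1) (intervalIntegrable_const)
        exact hmono
    _ = ⟪gradient f p, w⟫ := by simp
/-- `f(h_z(x) ⊕ y) ≥ e^{-z} f(y)`. -/
lemma psum_lb {f : EuclideanSpace ℝ (Fin d) → ℝ} (hf : ContDiff ℝ 1 f)
    (hpos : ∀ x, inBox x → 0 ≤ f x) (hDR : DRSubmodular f)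
    {x y : EuclideanSpace ℝ (Fin d)} (hx : inBox x) (hy : inBox y)
    {z : ℝ} (hz : z ∈ Icc (0:ℝ) 1) :
    Real.exp (-z) * f y ≤
      f (WithLp.toLp 2 (fun i => 1 - Real.exp (-(z * x i)) * (1 - y i)) : EuclideanSpace ℝ (Fin d)) := by
  set q : ℝ → EuclideanSpace ℝ (Fin d) :=
    fun s => (WithLp.toLp 2 (fun i => 1 - Real.exp (-(s * x i)) * (1 - y i)) : EuclideanSpace ℝ (Fin d)) with hq
  set q' : ℝ → EuclideanSpace ℝ (Fin d) :=
    fun s => (WithLp.toLp 2 (fun i => x i * Real.exp (-(s * x i)) * (1 - y i)) : EuclideanSpace ℝ (Fin d)) with hq'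
  -- basic bounds for s ∈ [0,1]
  have hexp01 : ∀ (s : ℝ), 0 ≤ s → ∀ i, Real.exp (-(s * x i)) ≤ 1 := by
    intro s hs i
    apply Real.exp_le_one_iff.2
    have := (hx i).1
    nlinarith
  have hqbox : ∀ s ∈ Icc (0:ℝ) 1, inBox (q s) := by
    intro s hs i
    have h1 := hexp01 s hs.1 i
    have h2 : (0:ℝ) ≤ Real.exp (-(s * x i)) := (Real.exp_pos _).le
    have h3 := (hy i).1; have h4 := (hy i).2
    constructor
    · simp only [hq]
      nlinarith
    · simp only [hq]
      nlinarith
  have hq'pos : ∀ s ∈ Icc (0:ℝ) 1, ∀ i, 0 ≤ q' s i := by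
    intro s hs i
    have h2 : (0:ℝ) ≤ Real.exp (-(s * x i)) := (Real.exp_pos _).le
    have h5 := (hx i).1; have h4 := (hy i).2
    simp only [hq']
    exact mul_nonneg (mul_nonneg h5 h2) (by linarith)
  have hqq'box : ∀ s ∈ Icc (0:ℝ) 1, inBox (q s + q' s) := by
    intro s hs i
    have h1 := hexp01 s hs.1 i
    have h2 : (0:ℝ) ≤ Real.exp (-(s * x i)) := (Real.exp_pos _).le
    have h3 := (hy i).1; have h4 := (hy i).2
    have h5 := (hx i).1; have h6 := (hx i).2
    rw [PiLp.add_apply]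
    simp only [hq, hq']
    have hA : 0 ≤ Real.exp (-(s * x i)) * (1 - y i) := mul_nonneg h2 (by linarith)
    have hA1 : Real.exp (-(s * x i)) * (1 - y i) ≤ 1 := by nlinarith
    constructor
    · nlinarith [mul_nonneg h5 hA]
    · nlinarith [mul_le_of_le_one_left hA h6]
  -- derivative of q ∘ f
  have hderiv : ∀ t : ℝ, HasDerivAt (fun s => f (q s)) (⟪gradient f (q t), q' t⟫) t := by
    intro t
    apply hasDerivAt_comp_euclid hf
    intro i
    have h1 : HasDerivAt (fun s : ℝ => -(s * x i)) (-(x i)) t := by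
      simpa [Pi.neg_def] using ((hasDerivAt_id t).mul_const (x i)).neg
    have h2 := (Real.hasDerivAt_exp (-(t * x i))).comp t h1
    have h3 := (h2.mul_const (1 - y i)).const_sub 1
    exact h3.congr_deriv (by simp only [hq', WithLp.ofLp_toLp]; ring)
  -- β(s) = e^s f(q s) is monotone on [0,1]
  set β : ℝ → ℝ := fun s => Real.exp s * f (q s) with hβ
  have hβderiv : ∀ t : ℝ, HasDerivAt β
      (Real.exp t * f (q t) + Real.exp t * ⟪gradient f (q t), q' t⟫) t := by
    intro t
    exact (Real.hasDerivAt_exp t).mul (hderiv t)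
  have hmono : MonotoneOn β (Icc (0:ℝ) 1) := by
    apply monotoneOn_of_deriv_nonneg (convex_Icc 0 1)
    · have hcq : Continuous fun s => f (q s) :=
        continuous_iff_continuousAt.2 fun t => (hderiv t).continuousAt
      exact (Real.continuous_exp.mul hcq).continuousOn
    · intro t _
      exact (hβderiv t).differentiableAt.differentiableWithinAt
    · intro t ht
      rw [interior_Icc] at ht
      rw [(hβderiv t).deriv]
      have htIcc : t ∈ Icc (0:ℝ) 1 := ⟨ht.1.le, ht.2.le⟩
      have hkey : f (q t + q' t) - f (q t) ≤ ⟪gradient f (q t), q' t⟫ :=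
        grad_lb hf hDR (hqbox t htIcc) (hq'pos t htIcc) (hqq'box t htIcc)
      have hnn : 0 ≤ f (q t + q' t) := hpos _ (hqq'box t htIcc)
      have : -f (q t) ≤ ⟪gradient f (q t), q' t⟫ := by linarith
      have hexp := (Real.exp_pos t).le
      nlinarith [Real.exp_pos t]
  have h01 : β 0 ≤ β z := hmono (left_mem_Icc.2 zero_le_one) hz hz.1
  have hq0 : q 0 = y := by
    ext i
    simp [hq]
  rw [hβ] at h01
  simp only [Real.exp_zero, one_mul, hq0] at h01
  have : Real.exp (-z) * f y ≤ Real.exp (-z) * (Real.exp z * f (q z)) := by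
    apply mul_le_mul_of_nonneg_left h01 (Real.exp_pos _).le
  calc Real.exp (-z) * f y ≤ Real.exp (-z) * (Real.exp z * f (q z)) := this
    _ = f (q z) := by rw [← mul_assoc, ← Real.exp_add]; norm_num
lemma exp_lip {u v : ℝ} (hu : u ≤ 1) (hv : v ≤ 1) :
    |Real.exp u - Real.exp v| ≤ Real.exp 1 * |u - v| := by
  have key : ∀ a b : ℝ, a ≤ 1 → b ≤ 1 → b ≤ a → Real.exp a - Real.exp b ≤ Real.exp 1 * (a - b) := by
    intro a b ha hb hba
    have h1 : (b - a) + 1 ≤ Real.exp (b - a) := Real.add_one_le_exp _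
    have h2 : Real.exp a - Real.exp b = Real.exp a * (1 - Real.exp (b - a)) := by
      rw [mul_sub, mul_one, ← Real.exp_add]; ring_nf
    have h3 : Real.exp a * (1 - Real.exp (b - a)) ≤ Real.exp a * (a - b) := by
      apply mul_le_mul_of_nonneg_left (by linarith) (Real.exp_pos a).le
    have h4 : Real.exp a * (a - b) ≤ Real.exp 1 * (a - b) := by
      apply mul_le_mul_of_nonneg_right (Real.exp_le_exp.2 ha) (by linarith)
    linarith
  rcases le_total v u with h | h
  · rw [abs_of_nonneg (by have := Real.exp_le_exp.2 h; linarith), abs_of_nonneg (by linarith)]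
    exact key u v hu hv h
  · rw [abs_of_nonpos (by have := Real.exp_le_exp.2 h; linarith), abs_of_nonpos (by linarith)]
    have := key v u hv hu h
    linarith

lemma one_sub_exp_neg_one_pos : (0:ℝ) < 1 - Real.exp (-1) := by
  have : Real.exp (-1) < 1 := Real.exp_lt_one_iff.mpr (by norm_num)
  linarith

end Helpers

set_option maxHeartbeats 1000000

/-- Main theorem: `1/e`-Upper-Linearizability.
For a down-closed convex `K ⊆ [0,1]^d` with `0 ∈ K` and a non-negative, continuously
differentiable, `M₁`-Lipschitz, continuous DR-submodular `f`, with `h(x) = 1 - e^{-x}`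
(i.e. `h = h_1`) and surrogate potential `F`, for all `x, y ∈ K`:
`(1/e) f(y) - f(h(x)) ≤ (1 - e⁻¹) ⟨∇F(x), y - x⟩`, i.e. `f` is `1/e`-Upper-Linearizable
with scaling parameter `β = 1 - e⁻¹`, reparametrization `h`, and surrogate potential
`𝔤(f,x) = ∇F(x)`. -/
theorem stmt1 {d : ℕ} (K : Set (EuclideanSpace ℝ (Fin d)))
    (hKbox : ∀ x ∈ K, inBox x) (hKconv : Convex ℝ K) (hKdc : DownClosed K)
    (hK0 : (0 : EuclideanSpace ℝ (Fin d)) ∈ K)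
    (f : EuclideanSpace ℝ (Fin d) → ℝ) (M₁ : ℝ)
    (hf : ContDiff ℝ 1 f) (hpos : ∀ x, inBox x → 0 ≤ f x)
    (hLip : ∀ x, inBox x → ‖gradient f x‖ ≤ M₁) (hDR : DRSubmodular f) :
    ∀ x ∈ K, ∀ y ∈ K,
      (1 / Real.exp 1) * f y - f (hmap 1 x) ≤
        (1 - Real.exp (-1)) * @inner ℝ _ _ (gradient (surrogate f) x) (y - x) := by
  intro x hxK y hyK
  have hone := one_sub_exp_neg_one_pos
  have hboxx : inBox x := hKbox x hxK
  have hboxy : inBox y := hKbox y hyK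
  have hIoc : Ι (0:ℝ) 1 = Ioc 0 1 := uIoc_of_le zero_le_one
  have hdiff : Differentiable ℝ f := hf.differentiable one_ne_zero
  have hfc : Continuous f := hdiff.continuous
  -- abbreviations
  set c : ℝ → ℝ := fun z => Real.exp (z - 1) / ((1 - Real.exp (-1)) * z) with hcdef
  set u : ℝ → EuclideanSpace ℝ (Fin d) := fun z => hmap z x with hudef
  set R : ℝ := Real.sqrt d * Real.exp 1 + 1 with hRdef
  -- basic facts
  have hexp1 : (1:ℝ) ≤ Real.exp 1 := by
    have := Real.add_one_le_exp 1; linarith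
  have hsqrtd : (0:ℝ) ≤ Real.sqrt d := Real.sqrt_nonneg _
  -- compactness bound on the gradient
  obtain ⟨M₀, hM₀⟩ := (isCompact_closedBall (0 : EuclideanSpace ℝ (Fin d)) R).exists_bound_of_continuousOn
    (hf.continuous_fderiv one_ne_zero).continuousOn
  set M : ℝ := max M₀ 0 with hMdef
  have hM0 : 0 ≤ M := le_max_right _ _
  have hM : ∀ p ∈ Metric.closedBall (0 : EuclideanSpace ℝ (Fin d)) R, ‖fderiv ℝ f p‖ ≤ M :=
    fun p hp => le_trans (hM₀ p hp) (le_max_left _ _)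
  -- Lipschitz property of f on the closed ball
  have hlipf : ∀ a ∈ Metric.closedBall (0 : EuclideanSpace ℝ (Fin d)) R,
      ∀ b ∈ Metric.closedBall (0 : EuclideanSpace ℝ (Fin d)) R, ‖f a - f b‖ ≤ M * ‖a - b‖ := by
    intro a ha b hb
    exact (convex_closedBall _ _).norm_image_sub_le_of_norm_fderiv_le
      (fun p _ => hdiff p) hM hb ha
  -- box points are in the closed ball
  have hboxball : ∀ p : EuclideanSpace ℝ (Fin d), inBox p →
      p ∈ Metric.closedBall (0 : EuclideanSpace ℝ (Fin d)) R := by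
    intro p hp
    rw [Metric.mem_closedBall, dist_zero_right]
    have h1 : ‖p‖ ≤ Real.sqrt d * 1 := euclid_norm_le_card zero_le_one
      (fun i => abs_le.2 ⟨by linarith [(hp i).1], (hp i).2⟩)
    nlinarith
  -- hmap points of the ball are in the closed ball
  have hmem : ∀ z ∈ Ioc (0:ℝ) 1, ∀ a ∈ Metric.ball x 1,
      hmap z a ∈ Metric.closedBall (0 : EuclideanSpace ℝ (Fin d)) R := by
    intro z hz a ha
    rw [Metric.mem_closedBall, dist_zero_right]
    have hcoord : ∀ i, |hmap z a i| ≤ Real.exp 1 := by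
      intro i
      have hai : |a i - x i| ≤ 1 := by
        have h1 := abs_coord_le_norm (a - x) i
        rw [PiLp.sub_apply] at h1
        rw [Metric.mem_ball, dist_eq_norm] at ha
        linarith
      have hxi := hboxx i
      have harg : -(z * a i) ≤ 1 := by
        have h1 : a i ≥ -1 := by cases abs_le.1 hai; linarith [hxi.1]
        nlinarith [hz.1, hz.2]
      have hexp : Real.exp (-(z * a i)) ≤ Real.exp 1 := Real.exp_le_exp.2 harg
      have hexp0 : 0 < Real.exp (-(z * a i)) := Real.exp_pos _
      rw [abs_le]
      constructor
      · show -(Real.exp 1) ≤ 1 - Real.exp (-(z * a i))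
        linarith
      · show 1 - Real.exp (-(z * a i)) ≤ Real.exp 1
        linarith
    have := euclid_norm_le_card (by positivity) hcoord
    linarith
  -- hmap of box points stays in box
  have hboxu : ∀ z ∈ Icc (0:ℝ) 1, inBox (u z) := by
    intro z hz i
    have hxi := hboxx i
    have hle1 : Real.exp (-(z * x i)) ≤ 1 :=
      Real.exp_le_one_iff.2 (neg_nonpos.2 (mul_nonneg hz.1 hxi.1))
    have hpos' : 0 < Real.exp (-(z * x i)) := Real.exp_pos _
    exact ⟨by simp only [hudef, hmap]; linarith, by simp only [hudef, hmap]; linarith⟩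
  -- norm bound ‖u z‖ ≤ √d z
  have hunorm : ∀ z ∈ Ioc (0:ℝ) 1, ‖u z‖ ≤ Real.sqrt d * z := by
    intro z hz
    apply euclid_norm_le_card hz.1.le
    intro i
    have hxi := hboxx i
    have h1 : 1 - z * x i ≤ Real.exp (-(z * x i)) := by
      have := Real.add_one_le_exp (-(z * x i)); linarith
    have h2 : Real.exp (-(z * x i)) ≤ 1 :=
      Real.exp_le_one_iff.2 (neg_nonpos.2 (mul_nonneg hz.1.le hxi.1))
    have h3 : z * x i ≤ z := mul_le_of_le_one_right hz.1.le hxi.2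
    rw [abs_le]
    constructor
    · show -z ≤ 1 - Real.exp (-(z * x i))
      linarith [hz.1.le]
    · show 1 - Real.exp (-(z * x i)) ≤ z
      linarith
  -- continuity facts
  have hucont : Continuous u := continuous_euclid_of_coords (fun i =>
    continuous_const.sub (Real.continuous_exp.comp ((continuous_id.mul continuous_const).neg)))
  have hccont : ContinuousOn c (Ioc 0 1) := by
    apply ContinuousOn.div
    · exact (Real.continuous_exp.comp (continuous_id.sub continuous_const)).continuousOn
    · exact (continuous_const.mul continuous_id).continuousOn
    · intro z hz
      have : z ≠ 0 := ne_of_gt hz.1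
      positivity
  -- ===== differentiation under the integral sign =====
  set dv : ℝ → EuclideanSpace ℝ (Fin d) :=
    fun z => (WithLp.toLp 2 (fun i => z * Real.exp (-(z * x i))) : EuclideanSpace ℝ (Fin d)) with hdvdef
  set F' : ℝ → EuclideanSpace ℝ (Fin d) →L[ℝ] ℝ :=
    fun z => c z • ((fderiv ℝ f (u z)).comp (diagCLM (dv z))) with hF'def
  have hdvcont : Continuous dv := continuous_euclid_of_coords (fun i =>
    continuous_id.mul (Real.continuous_exp.comp ((continuous_id.mul continuous_const).neg)))
  have hF_meas : ∀ᶠ x' in nhds x, AEStronglyMeasurable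
      (fun z => c z * (f (hmap z x') - f 0)) (volume.restrict (Ι (0:ℝ) 1)) := by
    apply Filter.Eventually.of_forall
    intro x'
    rw [hIoc]
    apply ContinuousOn.aestronglyMeasurable _ measurableSet_Ioc
    apply hccont.mul
    have : Continuous fun z => f (hmap z x') - f 0 :=
      (hfc.comp (continuous_euclid_of_coords (fun i =>
        continuous_const.sub (Real.continuous_exp.comp
          ((continuous_id.mul continuous_const).neg))))).sub continuous_const
    exact this.continuousOn
  have hF_int : IntervalIntegrable (fun z => c z * (f (hmap z x) - f 0)) volume 0 1 := by
    rw [intervalIntegrable_iff, hIoc]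
    apply Measure.integrableOn_of_bounded (M := M * Real.sqrt d / (1 - Real.exp (-1)))
      measure_Ioc_lt_top.ne
    · apply Measurable.aestronglyMeasurable
      apply Measurable.mul
      · exact (Real.measurable_exp.comp (measurable_id.sub_const 1)).div
          (measurable_const.mul measurable_id)
      · have : Continuous fun z => f (hmap z x) - f 0 :=
          (hfc.comp hucont).sub continuous_const
        exact this.measurable
    · rw [ae_restrict_iff' measurableSet_Ioc]
      apply Filter.Eventually.of_forall
      intro z hz
      have hz0 : (0:ℝ) < z := hz.1
      have hcz : 0 ≤ c z := by
        simp only [hcdef]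
        positivity
      have h0ball : (0 : EuclideanSpace ℝ (Fin d)) ∈ Metric.closedBall
          (0 : EuclideanSpace ℝ (Fin d)) R := by
        rw [Metric.mem_closedBall, dist_self]
        nlinarith
      have h1 : ‖f (u z) - f 0‖ ≤ M * ‖u z - 0‖ :=
        hlipf (u z) (hboxball _ (hboxu z ⟨hz.1.le, hz.2⟩)) 0 h0ball
      rw [sub_zero] at h1
      have h2 : ‖u z‖ ≤ Real.sqrt d * z := hunorm z hz
      have h3 : ‖(fun z => c z * (f (hmap z x) - f 0)) z‖ = c z * ‖f (u z) - f 0‖ := by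
        rw [norm_mul, Real.norm_eq_abs (c z), abs_of_nonneg hcz]
      rw [h3]
      have h4 : c z * ‖f (u z) - f 0‖ ≤ c z * (M * (Real.sqrt d * z)) := by
        apply mul_le_mul_of_nonneg_left _ hcz
        calc ‖f (u z) - f 0‖ ≤ M * ‖u z‖ := h1
          _ ≤ M * (Real.sqrt d * z) := mul_le_mul_of_nonneg_left h2 hM0
      have h5 : c z * (M * (Real.sqrt d * z)) ≤ M * Real.sqrt d / (1 - Real.exp (-1)) := by
        simp only [hcdef]
        rw [div_mul_eq_mul_div, div_le_div_iff₀ (by positivity) hone]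
        have hez : Real.exp (z - 1) ≤ 1 := Real.exp_le_one_iff.2 (by linarith [hz.2])
        have : Real.exp (z - 1) * (M * (Real.sqrt d * z)) ≤ 1 * (M * (Real.sqrt d * z)) :=
          mul_le_mul_of_nonneg_right hez (by positivity)
        nlinarith [mul_nonneg (mul_nonneg hM0 hsqrtd) hz0.le]
      linarith
  have hF'_meas : AEStronglyMeasurable F' (volume.restrict (Ι (0:ℝ) 1)) := by
    rw [hIoc]
    apply ContinuousOn.aestronglyMeasurable _ measurableSet_Ioc
    apply ContinuousOn.smul hccont
    exact (((hf.continuous_fderiv one_ne_zero).comp hucont).clm_comp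
      (continuous_diagCLM.comp hdvcont)).continuousOn
  set B : ℝ := Real.exp 1 * M / (1 - Real.exp (-1)) with hBdef
  have hB0 : 0 ≤ B := by
    simp only [hBdef]
    positivity
  have h_lip : ∀ᵐ z ∂(volume : Measure ℝ), z ∈ Ι (0:ℝ) 1 →
      LipschitzOnWith (Real.nnabs B) (fun x' => c z * (f (hmap z x') - f 0))
        (Metric.ball x 1) := by
    apply Filter.Eventually.of_forall
    intro z hz
    rw [hIoc] at hz
    have hz0 : (0:ℝ) < z := hz.1
    rw [lipschitzOnWith_iff_dist_le_mul]
    intro a ha b hb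
    rw [Real.dist_eq, dist_eq_norm]
    have hcz : 0 ≤ c z := by
      simp only [hcdef]; positivity
    have hdiffeq : c z * (f (hmap z a) - f 0) - c z * (f (hmap z b) - f 0)
        = c z * (f (hmap z a) - f (hmap z b)) := by ring
    rw [hdiffeq, abs_mul, abs_of_nonneg hcz]
    have h1 : |f (hmap z a) - f (hmap z b)| ≤ M * ‖hmap z a - hmap z b‖ :=
      hlipf _ (hmem z hz a ha) _ (hmem z hz b hb)
    have h2 : ‖hmap z a - hmap z b‖ ≤ (Real.exp 1 * z) * ‖a - b‖ := by
      apply euclid_norm_le_of_coord (by positivity)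
      intro i
      rw [PiLp.sub_apply, PiLp.sub_apply]
      have hexpab : |hmap z a i - hmap z b i|
          = |Real.exp (-(z * b i)) - Real.exp (-(z * a i))| := by
        show |(1 - Real.exp (-(z * a i))) - (1 - Real.exp (-(z * b i)))| = _
        congr 1
        ring
      show |hmap z a i - hmap z b i| ≤ Real.exp 1 * z * |a i - b i|
      rw [hexpab]
      have hargb : -(z * b i) ≤ 1 := by
        have h1' := abs_coord_le_norm (b - x) i
        rw [PiLp.sub_apply] at h1'
        rw [Metric.mem_ball, dist_eq_norm] at hb
        have : b i ≥ -1 := by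
          have := abs_le.1 (le_trans h1' hb.le)
          linarith [(hboxx i).1, this.1]
        nlinarith [hz.1.le, hz.2]
      have harga : -(z * a i) ≤ 1 := by
        have h1' := abs_coord_le_norm (a - x) i
        rw [PiLp.sub_apply] at h1'
        rw [Metric.mem_ball, dist_eq_norm] at ha
        have : a i ≥ -1 := by
          have := abs_le.1 (le_trans h1' ha.le)
          linarith [(hboxx i).1, this.1]
        nlinarith [hz.1.le, hz.2]
      calc |Real.exp (-(z * b i)) - Real.exp (-(z * a i))|
          ≤ Real.exp 1 * |(-(z * b i)) - (-(z * a i))| := exp_lip hargb harga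
        _ = Real.exp 1 * z * |a i - b i| := by
            rw [show (-(z * b i)) - (-(z * a i)) = z * (a i - b i) by ring, abs_mul,
              abs_of_pos hz0]
            ring
    have hcoe : ((Real.nnabs B : NNReal) : ℝ) = B := by
      rw [Real.coe_nnabs, abs_of_nonneg hB0]
    rw [hcoe]
    calc c z * |f (hmap z a) - f (hmap z b)|
        ≤ c z * (M * ((Real.exp 1 * z) * ‖a - b‖)) := by
          apply mul_le_mul_of_nonneg_left _ hcz
          calc |f (hmap z a) - f (hmap z b)| ≤ M * ‖hmap z a - hmap z b‖ := h1
            _ ≤ M * ((Real.exp 1 * z) * ‖a - b‖) := mul_le_mul_of_nonneg_left h2 hM0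
      _ ≤ B * ‖a - b‖ := by
          simp only [hcdef, hBdef]
          rw [div_mul_eq_mul_div, div_mul_eq_mul_div, div_le_div_iff₀ (by positivity) hone]
          have hez : Real.exp (z - 1) ≤ 1 := Real.exp_le_one_iff.2 (by linarith [hz.2])
          have hfac : (0:ℝ) ≤ M * (Real.exp 1 * z * ‖a - b‖) := by positivity
          have hmain : Real.exp (z - 1) * (M * (Real.exp 1 * z * ‖a - b‖))
              ≤ 1 * (M * (Real.exp 1 * z * ‖a - b‖)) :=
            mul_le_mul_of_nonneg_right hez hfac
          have hzb : z * ‖a - b‖ ≤ 1 * ‖a - b‖ :=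
            mul_le_mul_of_nonneg_right hz.2 (norm_nonneg _)
          nlinarith [mul_nonneg hM0 (norm_nonneg (a - b)), Real.exp_pos 1,
            mul_le_mul_of_nonneg_left hzb (mul_nonneg hM0 (Real.exp_pos 1).le)]
      _ = B * dist a b := by rw [dist_eq_norm]
  have h_diff : ∀ᵐ z ∂(volume : Measure ℝ), z ∈ Ι (0:ℝ) 1 →
      HasFDerivAt (fun x' => c z * (f (hmap z x') - f 0)) (F' z) x := by
    apply Filter.Eventually.of_forall
    intro z _
    have h1 : HasFDerivAt (fun x' => f (hmap z x'))
        ((fderiv ℝ f (u z)).comp (diagCLM (dv z))) x :=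
      (hdiff (hmap z x)).hasFDerivAt.comp x (hasFDerivAt_hmap z x)
    exact ((h1.sub_const (f 0)).const_mul (c z))
  have hdom := intervalIntegral.hasFDerivAt_integral_of_dominated_loc_of_lip
    (F := fun x' z => c z * (f (hmap z x') - f 0)) (F' := F') (x₀ := x)
    (a := 0) (b := 1) (bound := fun _ => B) (μ := volume)
    (Metric.ball_mem_nhds x zero_lt_one) hF_meas hF_int hF'_meas h_lip (intervalIntegrable_const) h_diff
  obtain ⟨hF'int, hDF⟩ := hdom
  -- ===== link with the gradient of the surrogate =====
  have hsurr : HasFDerivAt (surrogate f) (∫ z in (0:ℝ)..1, F' z) x := by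
    have hs : surrogate f = fun x' => ∫ z in (0:ℝ)..1, c z * (f (hmap z x') - f 0) := by
      funext x'
      simp only [surrogate, hcdef]
    rw [hs]
    exact hDF
  have hgradeq : ⟪gradient (surrogate f) x, y - x⟫ = ∫ z in (0:ℝ)..1, (F' z) (y - x) := by
    rw [inner_gradient_eq, hsurr.fderiv]
    exact ContinuousLinearMap.intervalIntegral_apply hF'int (y - x)
  -- ===== scalar quantities =====
  set w1 : ℝ → EuclideanSpace ℝ (Fin d) :=
    fun z => (WithLp.toLp 2 (fun i => Real.exp (-(z * x i)) * (y i - x i)) : EuclideanSpace ℝ (Fin d)) with hw1def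
  set S : ℝ → ℝ := fun z => ⟪gradient f (u z), w1 z⟫ with hSdef
  set Φd : ℝ → ℝ :=
    fun z => ⟪gradient f (u z), (WithLp.toLp 2 (fun i => x i * Real.exp (-(z * x i))) : EuclideanSpace ℝ (Fin d))⟫
    with hΦddef
  have hΦd : ∀ z : ℝ, HasDerivAt (fun s => f (u s)) (Φd z) z := by
    intro z
    apply hasDerivAt_comp_euclid hf
    intro i
    have h1 : HasDerivAt (fun s : ℝ => -(s * x i)) (-(x i)) z := by
      simpa [Pi.neg_def] using ((hasDerivAt_id z).mul_const (x i)).neg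
    have h2 := (Real.hasDerivAt_exp (-(z * x i))).comp z h1
    have h3 := h2.const_sub 1
    have h4 : HasDerivAt (fun s : ℝ => 1 - Real.exp (-(s * x i)))
        (x i * Real.exp (-(z * x i))) z := by
      exact h3.congr_deriv (by ring)
    have h5 : (fun s : ℝ => u s i) = fun s : ℝ => 1 - Real.exp (-(s * x i)) := by
      funext s
      simp only [hudef, hmap]
    rw [h5]
    exact h4
  have hS : ∀ z ∈ Ioc (0:ℝ) 1,
      (1 - Real.exp (-1)) * (F' z (y - x)) = Real.exp (z - 1) * S z := by
    intro z hz
    have hz0 : z ≠ 0 := ne_of_gt hz.1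
    have h1 : F' z (y - x) = c z * (fderiv ℝ f (u z) (diagCLM (dv z) (y - x))) := by
      simp only [hF'def, ContinuousLinearMap.smul_apply, ContinuousLinearMap.comp_apply,
        smul_eq_mul]
    have h2 : diagCLM (dv z) (y - x) = z • w1 z := by
      ext i
      rw [diagCLM_apply]
      have hr : (z • w1 z) i = z * w1 z i := rfl
      rw [hr]
      simp only [hdvdef, hw1def, PiLp.sub_apply]
      ring
    have h3 : fderiv ℝ f (u z) (z • w1 z) = z * S z := by
      rw [← inner_gradient_eq, real_inner_smul_right, hSdef]
    rw [h1, h2, h3, hcdef]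
    field_simp
  -- continuity facts
  have hw1cont : Continuous w1 := continuous_euclid_of_coords (fun i =>
    (Real.continuous_exp.comp ((continuous_id.mul continuous_const).neg)).mul continuous_const)
  have hScont : Continuous S := by
    apply Continuous.inner ((continuous_gradient hf).comp hucont) hw1cont
  have hΦdcont : Continuous Φd := by
    apply Continuous.inner ((continuous_gradient hf).comp hucont)
    exact continuous_euclid_of_coords (fun i =>
      continuous_const.mul (Real.continuous_exp.comp ((continuous_id.mul continuous_const).neg)))
  have hΦcont : Continuous (fun z => f (u z)) := hfc.comp hucont
  have hez1cont : Continuous (fun z : ℝ => Real.exp (z - 1)) :=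
    Real.continuous_exp.comp (continuous_id.sub continuous_const)
  -- ===== pointwise inequality =====
  have hpt : ∀ z ∈ Icc (0:ℝ) 1,
      Real.exp (-1) * f y - (Real.exp (z-1) * f (u z) + Real.exp (z-1) * Φd z)
        ≤ Real.exp (z - 1) * S z := by
    intro z hz
    set wy : EuclideanSpace ℝ (Fin d) :=
      (WithLp.toLp 2 (fun i => Real.exp (-(z * x i)) * y i) : EuclideanSpace ℝ (Fin d)) with hwydef
    have hexple : ∀ i, Real.exp (-(z * x i)) ≤ 1 := fun i =>
      Real.exp_le_one_iff.2 (neg_nonpos.2 (mul_nonneg hz.1 (hboxx i).1))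
    have hwy0 : ∀ i, 0 ≤ wy i := fun i => mul_nonneg (Real.exp_pos _).le (hboxy i).1
    have hsum : u z + wy =
        (WithLp.toLp 2 (fun i => 1 - Real.exp (-(z * x i)) * (1 - y i)) : EuclideanSpace ℝ (Fin d)) := by
      ext i
      rw [PiLp.add_apply]
      simp only [hudef, hmap, hwydef]
      ring
    have hsumbox : inBox (u z + wy) := by
      rw [hsum]
      intro i
      have h1 := hexple i
      have h2 : (0:ℝ) < Real.exp (-(z * x i)) := Real.exp_pos _
      have h3 := (hboxy i).1
      have h4 := (hboxy i).2
      have hA : 0 ≤ Real.exp (-(z * x i)) * (1 - y i) := mul_nonneg h2.le (by linarith)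
      have hA1 : Real.exp (-(z * x i)) * (1 - y i) ≤ 1 := by nlinarith
      constructor
      · show (0:ℝ) ≤ 1 - Real.exp (-(z * x i)) * (1 - y i)
        linarith
      · show 1 - Real.exp (-(z * x i)) * (1 - y i) ≤ 1
        linarith
    have h1 : f (u z + wy) - f (u z) ≤ ⟪gradient f (u z), wy⟫ :=
      grad_lb hf hDR (hboxu z hz) hwy0 hsumbox
    have h2 : Real.exp (-z) * f y ≤ f (u z + wy) := by
      rw [hsum]
      exact psum_lb hf hpos hDR hboxx hboxy hz
    have h4 : S z = ⟪gradient f (u z), wy⟫ - Φd z := by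
      have hw1eq : w1 z = wy -
          (show EuclideanSpace ℝ (Fin d) from WithLp.toLp 2 fun i => x i * Real.exp (-(z * x i))) := by
        ext i
        rw [PiLp.sub_apply]
        simp only [hw1def, hwydef]
        ring
      show ⟪gradient f (u z), w1 z⟫ = ⟪gradient f (u z), wy⟫ -
        ⟪gradient f (u z),
          (show EuclideanSpace ℝ (Fin d) from WithLp.toLp 2 fun i => x i * Real.exp (-(z * x i)))⟫
      rw [hw1eq, inner_sub_right]
    have h5 : Real.exp (-z) * f y - f (u z) - Φd z ≤ S z := by
      rw [h4]; linarith
    have hee : Real.exp (z - 1) * Real.exp (-z) = Real.exp (-1) := by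
      rw [← Real.exp_add]; ring_nf
    have h6 := mul_le_mul_of_nonneg_left h5 (Real.exp_pos (z-1)).le
    have h7 : Real.exp (-1) * f y - (Real.exp (z-1) * f (u z) + Real.exp (z-1) * Φd z)
        = Real.exp (z-1) * (Real.exp (-z) * f y - f (u z) - Φd z) := by
      rw [← hee]; ring
    rw [h7]
    exact h6
  -- ===== integral computations =====
  have hGcont : Continuous (fun z => Real.exp (z-1) * f (u z) + Real.exp (z-1) * Φd z) :=
    (hez1cont.mul hΦcont).add (hez1cont.mul hΦdcont)
  have hmono : (∫ z in (0:ℝ)..1,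
        (Real.exp (-1) * f y - (Real.exp (z-1) * f (u z) + Real.exp (z-1) * Φd z)))
      ≤ ∫ z in (0:ℝ)..1, Real.exp (z - 1) * S z := by
    apply intervalIntegral.integral_mono_on zero_le_one
      ((continuous_const.sub hGcont).intervalIntegrable 0 1)
      ((hez1cont.mul hScont).intervalIntegrable 0 1)
    exact hpt
  have hftc : (∫ z in (0:ℝ)..1, (Real.exp (z-1) * f (u z) + Real.exp (z-1) * Φd z))
      = f (u 1) - Real.exp (-1) * f (u 0) := by
    have hA : ∀ z ∈ uIcc (0:ℝ) 1, HasDerivAt (fun s => Real.exp (s - 1) * f (u s))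
        (Real.exp (z-1) * f (u z) + Real.exp (z-1) * Φd z) z := by
      intro z _
      have hexp : HasDerivAt (fun s : ℝ => Real.exp (s - 1)) (Real.exp (z-1)) z := by
        have := (Real.hasDerivAt_exp (z-1)).comp z ((hasDerivAt_id z).sub_const 1)
        simpa [Function.comp_def] using this
      have := hexp.mul (hΦd z)
      exact this.congr_deriv (by ring)
    have hsub := intervalIntegral.integral_eq_sub_of_hasDerivAt
      (f := fun s => Real.exp (s - 1) * f (u s))
      (f' := fun z => Real.exp (z-1) * f (u z) + Real.exp (z-1) * Φd z)
      hA (hGcont.intervalIntegrable 0 1)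
    rw [hsub]
    norm_num
  have hsplit : (∫ z in (0:ℝ)..1,
        (Real.exp (-1) * f y - (Real.exp (z-1) * f (u z) + Real.exp (z-1) * Φd z)))
      = Real.exp (-1) * f y - (f (u 1) - Real.exp (-1) * f (u 0)) := by
    rw [intervalIntegral.integral_sub intervalIntegrable_const
      (hGcont.intervalIntegrable 0 1), hftc]
    norm_num
  have hu0 : f (u 0) = f 0 := by
    congr 1
    ext i
    have : (0 : EuclideanSpace ℝ (Fin d)) i = 0 := rfl
    simp only [hudef, hmap, this]
    norm_num
  have hbox0 : inBox (0 : EuclideanSpace ℝ (Fin d)) := by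
    intro i
    have : (0 : EuclideanSpace ℝ (Fin d)) i = 0 := rfl
    rw [this]
    norm_num
  have hf00 : 0 ≤ f 0 := hpos 0 hbox0
  -- ===== final chain =====
  have hcongr : (∫ z in (0:ℝ)..1, (1 - Real.exp (-1)) * (F' z (y - x)))
      = ∫ z in (0:ℝ)..1, Real.exp (z - 1) * S z := by
    apply intervalIntegral.integral_congr_ae
    apply Filter.Eventually.of_forall
    intro z hz
    rw [hIoc] at hz
    exact hS z hz
  have hfinal : (1 - Real.exp (-1)) * ⟪gradient (surrogate f) x, y - x⟫
      = ∫ z in (0:ℝ)..1, Real.exp (z - 1) * S z := by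
    rw [hgradeq, ← intervalIntegral.integral_const_mul, hcongr]
  have hexpinv : Real.exp (-1) = 1 / Real.exp 1 := by
    rw [Real.exp_neg, one_div]
  have hu1 : f (u 1) = f (hmap 1 x) := by rw [hudef]
  have hfy : 0 ≤ Real.exp (-1) * f 0 := mul_nonneg (Real.exp_pos _).le hf00
  calc (1 / Real.exp 1) * f y - f (hmap 1 x)
      = Real.exp (-1) * f y - f (u 1) := by rw [hexpinv, hu1]
    _ ≤ Real.exp (-1) * f y - (f (u 1) - Real.exp (-1) * f (u 0)) := by
        rw [hu0]; linarith
    _ ≤ ∫ z in (0:ℝ)..1, Real.exp (z - 1) * S z := by rw [← hsplit]; exact hmono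
    _ = (1 - Real.exp (-1)) * ⟪gradient (surrogate f) x, y - x⟫ := hfinal.symm
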